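/- Let A, B ∈ ℂ^{n×n} admit a Weierstrass decomposition T·A·S = diag(J, I_{n−d}), T·B·S = diag(I_d, N) with N nilpotent, and suppose J = diag(J₁, J₂) is block diagonal with J₁ ∈ ℂ^{s×s}. Let Y ∈ ℂ^{n×s}, set U = S_{(:,1:s)} (S^{-1})_{(1:s,:)} Y, Ā = (BU)*·A·U and B̄ = (BU)*·B·U, and assume that the s×s matrices (BU)*·(T^{-1})_{(:,1:s)} and (S^{-1})_{(1:s,:)}·Y are invertible. If y ∈ ℂ^s is nonzero and λ̄ ∈ ℂ satisfy Ā·y = λ̄·B̄·y, then U·y ≠ 0, A·(U·y) = λ̄·B·(U·y), and λ̄ is an eigenvalue of J₁ (det(λ̄I_s − J₁) = 0). -/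

import Mathlib

open Matrix

private lemma aux_symm {p q : ℕ} (h : p ≤ q) (i : Fin q) :
    (finSumFinEquiv.trans (finCongr (Nat.add_sub_cancel' h))).symm i =
      if hi : (i : ℕ) < p then Sum.inl ⟨i, hi⟩
      else Sum.inr ⟨(i : ℕ) - p, by omega⟩ := by
  rw [Equiv.symm_apply_eq]
  split
  · apply Fin.ext; simp
  · apply Fin.ext
    simp only [Equiv.trans_apply, finSumFinEquiv_apply_right, finCongr_apply, Fin.coe_cast,
      Fin.coe_natAdd]
    omega

private lemma mul_sub_col {m k : ℕ} (X Y : Matrix (Fin m) (Fin m) ℂ)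
    (f : Fin k → Fin m) : (X * Y).submatrix id f = X * Y.submatrix id f := by
  ext i j
  simp [Matrix.mul_apply]

private lemma mul_one_sub_col {m k : ℕ} (X : Matrix (Fin m) (Fin m) ℂ)
    (f : Fin k → Fin m) :
    X * (1 : Matrix (Fin m) (Fin m) ℂ).submatrix id f = X.submatrix id f := by
  rw [← mul_sub_col, mul_one]

private lemma P_mul_apply {m k : ℕ} (h : k ≤ m) (Z : Matrix (Fin k) (Fin k) ℂ)
    (i : Fin m) (j : Fin k) :
    ((1 : Matrix (Fin m) (Fin m) ℂ).submatrix id (Fin.castLE h) * Z) i j =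
      if hi : (i : ℕ) < k then Z ⟨i, hi⟩ j else 0 := by
  simp only [Matrix.mul_apply, Matrix.submatrix_apply, Matrix.one_apply, id_eq, ite_mul,
    one_mul, zero_mul]
  by_cases hi : (i : ℕ) < k
  · rw [dif_pos hi, Finset.sum_eq_single ⟨i, hi⟩]
    · have : i = Fin.castLE h ⟨i, hi⟩ := Fin.ext rfl
      rw [if_pos this]
    · intro b _ hb
      rw [if_neg]
      intro hc
      apply hb
      apply Fin.ext
      have : (i : ℕ) = (Fin.castLE h b : ℕ) := congrArg Fin.val hc
      simp only [Fin.coe_castLE] at this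
      simp [this]
    · simp
  · rw [dif_neg hi, Finset.sum_eq_zero]
    intro b _
    rw [if_neg]
    intro hc
    apply hi
    have : (i : ℕ) = (Fin.castLE h b : ℕ) := congrArg Fin.val hc
    simp only [Fin.coe_castLE] at this
    rw [this]; exact b.isLt

private lemma mulVec_inj {m : ℕ} {M : Matrix (Fin m) (Fin m) ℂ} (hM : IsUnit M)
    {v w : Fin m → ℂ} (h : M.mulVec v = M.mulVec w) : v = w :=
  Matrix.mulVec_injective_iff_isUnit.mpr hM h

theorem stmt_14 (n d s : ℕ) (hs : s ≤ d) (hd : d ≤ n)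
    (A B S T : Matrix (Fin n) (Fin n) ℂ)
    (J : Matrix (Fin d) (Fin d) ℂ) (N : Matrix (Fin (n - d)) (Fin (n - d)) ℂ)
    (J₁ : Matrix (Fin s) (Fin s) ℂ) (J₂ : Matrix (Fin (d - s)) (Fin (d - s)) ℂ)
    (hS : IsUnit S) (hT : IsUnit T) (hN : IsNilpotent N)
    (hA : T * A * S =
      (Matrix.reindex (finSumFinEquiv.trans (finCongr (Nat.add_sub_cancel' hd)))
        (finSumFinEquiv.trans (finCongr (Nat.add_sub_cancel' hd))))
        (Matrix.fromBlocks J 0 0 1))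
    (hB : T * B * S =
      (Matrix.reindex (finSumFinEquiv.trans (finCongr (Nat.add_sub_cancel' hd)))
        (finSumFinEquiv.trans (finCongr (Nat.add_sub_cancel' hd))))
        (Matrix.fromBlocks 1 0 0 N))
    (hJ : J =
      (Matrix.reindex (finSumFinEquiv.trans (finCongr (Nat.add_sub_cancel' hs)))
        (finSumFinEquiv.trans (finCongr (Nat.add_sub_cancel' hs))))
        (Matrix.fromBlocks J₁ 0 0 J₂))
    (Y : Matrix (Fin n) (Fin s) ℂ)
    (U : Matrix (Fin n) (Fin s) ℂ)
    (hU : U = S.submatrix id (Fin.castLE (hs.trans hd)) *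
      (S⁻¹.submatrix (Fin.castLE (hs.trans hd)) id * Y))
    (hRT : IsUnit ((B * U)ᴴ * T⁻¹.submatrix id (Fin.castLE (hs.trans hd))))
    (hSY : IsUnit (S⁻¹.submatrix (Fin.castLE (hs.trans hd)) id * Y)) :
    ∀ (y : Fin s → ℂ) (lam : ℂ), y ≠ 0 →
      ((B * U)ᴴ * A * U).mulVec y = lam • ((B * U)ᴴ * B * U).mulVec y →
      U.mulVec y ≠ 0 ∧
      A.mulVec (U.mulVec y) = lam • B.mulVec (U.mulVec y) ∧
      (lam • (1 : Matrix (Fin s) (Fin s) ℂ) - J₁).det = 0 := by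
  intro y lam hy heig
  set ι : Fin s → Fin n := Fin.castLE (hs.trans hd) with hι
  set P : Matrix (Fin n) (Fin s) ℂ := (1 : Matrix (Fin n) (Fin n) ℂ).submatrix id ι with hP
  set K : Matrix (Fin s) (Fin s) ℂ := S⁻¹.submatrix ι id * Y with hK
  set T₁ : Matrix (Fin n) (Fin s) ℂ := T⁻¹.submatrix id ι with hT₁
  have hTdet : IsUnit T.det := (Matrix.isUnit_iff_isUnit_det T).mp hT
  have hj : ∀ j : Fin s, (finSumFinEquiv.trans (finCongr (Nat.add_sub_cancel' hd))).symm (ι j)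
      = Sum.inl (Fin.castLE hs j) := by
    intro j
    rw [aux_symm hd, dif_pos (show ((ι j : Fin n) : ℕ) < d from lt_of_lt_of_le j.isLt hs)]
    exact congrArg Sum.inl (Fin.ext rfl)
  -- block columns of D_A, D_B
  have hDA : ((Matrix.reindex (finSumFinEquiv.trans (finCongr (Nat.add_sub_cancel' hd)))
        (finSumFinEquiv.trans (finCongr (Nat.add_sub_cancel' hd))))
        (Matrix.fromBlocks J 0 0 1)).submatrix id ι = P * J₁ := by
    ext i j
    rw [hP, hι, P_mul_apply (hs.trans hd)]
    have hj' := hj j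
    rw [hι] at hj'
    simp only [Matrix.submatrix_apply, Matrix.reindex_apply, id_eq, hj']
    rw [aux_symm hd i]
    by_cases hi : (i : ℕ) < d
    · rw [dif_pos hi]
      simp only [Matrix.fromBlocks_apply₁₁]
      rw [hJ]
      simp only [Matrix.reindex_apply, Matrix.submatrix_apply]
      have hj2 : (finSumFinEquiv.trans (finCongr (Nat.add_sub_cancel' hs))).symm
          (Fin.castLE hs j) = Sum.inl j := by
        rw [aux_symm hs, dif_pos (show ((Fin.castLE hs j : Fin d) : ℕ) < s from j.isLt)]
        exact congrArg Sum.inl (Fin.ext rfl)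
      rw [hj2, aux_symm hs]
      by_cases his : (i : ℕ) < s
      · rw [dif_pos his, dif_pos his]
        simp
      · rw [dif_neg his, dif_neg his]
        simp
    · rw [dif_neg hi, dif_neg (fun h => hi (lt_of_lt_of_le h hs))]
      simp
  have hDB : ((Matrix.reindex (finSumFinEquiv.trans (finCongr (Nat.add_sub_cancel' hd)))
        (finSumFinEquiv.trans (finCongr (Nat.add_sub_cancel' hd))))
        (Matrix.fromBlocks 1 0 0 N)).submatrix id ι = P := by
    ext i j
    simp only [Matrix.submatrix_apply, Matrix.reindex_apply, id_eq, hj j, hP]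
    rw [aux_symm hd i]
    by_cases hi : (i : ℕ) < d
    · rw [dif_pos hi]
      simp only [Matrix.fromBlocks_apply₁₁, Matrix.one_apply, Fin.ext_iff, Fin.coe_castLE,
        hι, id_eq]
    · rw [dif_neg hi]
      simp only [Matrix.fromBlocks_apply₂₁, Matrix.zero_apply, Matrix.one_apply]
      rw [if_neg]
      intro h
      apply hi
      have : (i : ℕ) = (j : ℕ) := by
        have := congrArg Fin.val h
        simpa [hι] using this
      rw [this]; exact lt_of_lt_of_le j.isLt hs
  -- key identities
  have hAS : A * S = T⁻¹ * (T * A * S) := by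
    rw [← Matrix.mul_assoc, ← Matrix.mul_assoc, Matrix.nonsing_inv_mul T hTdet, Matrix.one_mul]
  have hBS : B * S = T⁻¹ * (T * B * S) := by
    rw [← Matrix.mul_assoc, ← Matrix.mul_assoc, Matrix.nonsing_inv_mul T hTdet, Matrix.one_mul]
  have key1 : A * S.submatrix id ι = T₁ * J₁ := by
    rw [← mul_sub_col, hAS, hA, mul_sub_col, hDA, ← Matrix.mul_assoc, hT₁, hP,
      mul_one_sub_col]
  have key2 : B * S.submatrix id ι = T₁ := by
    rw [← mul_sub_col, hBS, hB, mul_sub_col, hDB, hT₁, hP, mul_one_sub_col]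
  have hAU : A * U = T₁ * J₁ * K := by
    rw [hU, ← Matrix.mul_assoc, key1]
  have hBU : B * U = T₁ * K := by
    rw [hU, ← Matrix.mul_assoc, key2]
  -- eigen equation transfer
  set M : Matrix (Fin s) (Fin s) ℂ := (B * U)ᴴ * T₁ with hM
  set z : Fin s → ℂ := K.mulVec y with hz
  have hMA : (B * U)ᴴ * A * U = M * J₁ * K := by
    rw [Matrix.mul_assoc, hAU, hM]
    simp only [Matrix.mul_assoc]
  have hMB : (B * U)ᴴ * B * U = M * K := by
    rw [Matrix.mul_assoc]
    nth_rewrite 2 [hBU]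
    rw [hM]
    simp only [Matrix.mul_assoc]
  have hMz : M.mulVec (J₁.mulVec z) = M.mulVec (lam • z) := by
    rw [hMA, hMB] at heig
    rw [hz, Matrix.mulVec_mulVec, Matrix.mulVec_mulVec, Matrix.mulVec_smul,
      Matrix.mulVec_mulVec, heig]
  have hJz : J₁.mulVec z = lam • z := mulVec_inj hRT hMz
  have hzne : z ≠ 0 := by
    intro h
    exact hy (mulVec_inj hSY (by rw [← hz, h, Matrix.mulVec_zero]))
  refine ⟨?_, ?_, ?_⟩
  · -- U y ≠ 0
    intro h
    have hSP : S.submatrix id ι = S * P := (mul_one_sub_col S ι).symm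
    have hUy : U.mulVec y = S.mulVec (P.mulVec z) := by
      rw [hU, hSP, ← Matrix.mulVec_mulVec, ← Matrix.mulVec_mulVec, ← hz]
    have hPz : P.mulVec z = 0 := mulVec_inj hS (by rw [← hUy, h, Matrix.mulVec_zero])
    apply hzne
    funext k
    have h2 := congrFun hPz (ι k)
    simpa [hP, hι, Matrix.mulVec, dotProduct, Matrix.one_apply,
      Fin.castLE_inj] using h2
  · -- eigen equation
    have h1 : A.mulVec (U.mulVec y) = T₁.mulVec (J₁.mulVec z) := by
      rw [Matrix.mulVec_mulVec, hAU, hz, Matrix.mulVec_mulVec, Matrix.mulVec_mulVec,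
        Matrix.mul_assoc]
    have h2 : B.mulVec (U.mulVec y) = T₁.mulVec z := by
      rw [Matrix.mulVec_mulVec, hBU, hz, Matrix.mulVec_mulVec]
    rw [h1, h2, hJz, Matrix.mulVec_smul]
  · -- determinant
    by_contra hdet
    have hunit : IsUnit (lam • (1 : Matrix (Fin s) (Fin s) ℂ) - J₁) :=
      (Matrix.isUnit_iff_isUnit_det _).mpr (isUnit_iff_ne_zero.mpr hdet)
    apply hzne
    apply mulVec_inj hunit
    rw [Matrix.mulVec_zero, Matrix.sub_mulVec, Matrix.smul_mulVec,
      Matrix.one_mulVec, hJz, sub_self]
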